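/- Let R be a commutative Noetherian ring and suppose every R-module is either injective or poor (R has no middle class). Then R is Artinian. -/

import Mathlib

universe u

/-- `M` is `N`-injective. -/
def RelInjective (R : Type u) [Ring R] (M N : Type u) [AddCommGroup M] [Module R M]
    [AddCommGroup N] [Module R N] : Prop :=
  ∀ (K : Submodule R N) (f : K →ₗ[R] M), ∃ g : N →ₗ[R] M, ∀ x : K, g x = f x

/-- `M` is poor: whenever `M` is `N`-injective, `N` is semisimple. -/
def Poor (R : Type u) [Ring R] (M : Type u) [AddCommGroup M] [Module R M] : Prop :=
  ∀ (N : Type u) [AddCommGroup N] [Module R N], RelInjective R M N → IsSemisimpleModule R N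

/-- `R` has no middle class: every module is injective or poor. -/
def NoMiddleClass (R : Type u) [Ring R] : Prop :=
  ∀ (M : Type u) [AddCommGroup M] [Module R M], Module.Injective R M ∨ Poor R M

open CategoryTheory in
/-- Over any nontrivial ring there is a nonzero injective module (in the same universe). -/
lemma exists_nonzero_injective (B : Type u) [Ring B] [Nontrivial B] :
    ∃ (M : Type u) (_ : AddCommGroup M) (_ : Module B M),
      Module.Injective B M ∧ ∃ m : M, m ≠ 0 := by
  haveI : EnoughInjectives (ModuleCat.{u} B) := inferInstance
  let J := Injective.under (ModuleCat.of B B)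
  haveI : CategoryTheory.Injective (ModuleCat.of B (J : Type u)) :=
    Injective.injective_under (ModuleCat.of B B)
  refine ⟨(J : Type u), inferInstance, inferInstance,
    Module.injective_module_of_injective_object B (J : Type u), ?_⟩
  refine ⟨Injective.ι (ModuleCat.of B B) (1 : B), fun h0 => ?_⟩
  have hinj : Function.Injective (Injective.ι (ModuleCat.of B B)) :=
    (ModuleCat.mono_iff_injective _).mp inferInstance
  have h1 : (1 : B) = 0 := by
    apply hinj
    rw [h0, map_zero]
  exact one_ne_zero h1

/-- Hopkins-type result: a commutative Noetherian ring all of whose primes are maximal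
is Artinian. -/
lemma artinianRing_of_prime_maximal (R : Type u) [CommRing R] [IsNoetherianRing R]
    (hmax : ∀ P : Ideal R, P.IsPrime → P.IsMaximal) : IsArtinianRing R := by
  have main : ∀ N : Submodule R R, IsArtinian R (R ⧸ N) := by
    by_contra hS
    push_neg at hS
    obtain ⟨N0, hN0⟩ := hS
    obtain ⟨N, hN, hNmax⟩ :=
      (set_has_maximal_iff_noetherian.mpr (inferInstance : IsNoetherian R R))
        {N : Submodule R R | ¬ IsArtinian R (R ⧸ N)} ⟨N0, hN0⟩
    rcases subsingleton_or_nontrivial (R ⧸ N) with hsub | hnt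
    · exact hN inferInstance
    obtain ⟨P, hPassoc⟩ := associatedPrimes.nonempty R (R ⧸ N)
    obtain ⟨hPprime, y, hy⟩ := isAssociatedPrime_iff.mp hPassoc
    rw [Submodule.bot_colon'] at hy
    have hy0 : y ≠ 0 := by
      rintro rfl
      apply hPprime.ne_top
      rw [hy]
      simp [Submodule.annihilator_bot]
    have hPy : P = Ideal.torsionOf R (R ⧸ N) y := by
      rw [hy]
      ext r
      rw [Submodule.mem_annihilator_span_singleton, Ideal.mem_torsionOf_iff]
    haveI := hmax P hPprime
    have hsimple : IsSimpleModule R (R ⧸ P) :=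
      (isSimpleModule_iff_isCoatom (m := (P : Submodule R R))).mpr
        (Ideal.isMaximal_def.mp (hmax P hPprime))
    haveI : IsSimpleOrder (Submodule R (R ⧸ P)) := hsimple.toIsSimpleOrder
    haveI : Finite (Submodule R (R ⧸ P)) := open scoped IsSimpleOrder in inferInstance
    have hart1 : IsArtinian R (R ⧸ P) := Finite.to_wellFoundedLT
    have hartT : IsArtinian R (R ⧸ Ideal.torsionOf R (R ⧸ N) y) := hPy ▸ hart1
    have hartSpan : IsArtinian R (R ∙ y) :=
      isArtinian_of_linearEquiv (Ideal.quotTorsionOfEquivSpanSingleton R (R ⧸ N) y)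
    set T := (R ∙ y).comap N.mkQ with hT
    have hNT : N ≤ T := by
      intro x hx
      have : N.mkQ x = 0 := by
        rw [Submodule.mkQ_apply, Submodule.Quotient.mk_eq_zero]
        exact hx
      simp only [hT, Submodule.mem_comap, this]
      exact Submodule.zero_mem _
    have hmkQsurj : Function.Surjective N.mkQ := Submodule.Quotient.mk_surjective N
    have hmap : T.map N.mkQ = R ∙ y :=
      Submodule.map_comap_eq_of_surjective hmkQsurj _
    have hTne : N ≠ T := by
      intro hEq
      obtain ⟨x, hx⟩ := hmkQsurj y
      have hxT : x ∈ T := by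
        simp only [hT, Submodule.mem_comap, hx]
        exact Submodule.mem_span_singleton_self y
      rw [← hEq] at hxT
      apply hy0
      rw [← hx, Submodule.mkQ_apply, Submodule.Quotient.mk_eq_zero]
      exact hxT
    have hartQT : IsArtinian R (R ⧸ T) := by
      by_contra hc
      exact hNmax T hc (lt_of_le_of_ne hNT hTne)
    have e2 := Submodule.quotientQuotientEquivQuotient N T hNT
    rw [hmap] at e2
    have hart2 : IsArtinian R ((R ⧸ N) ⧸ (R ∙ y)) := isArtinian_of_linearEquiv e2.symm
    have : IsArtinian R (R ⧸ N) := by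
      refine isArtinian_of_range_eq_ker (R ∙ y).subtype (R ∙ y).mkQ ?_
      rw [Submodule.range_subtype, Submodule.ker_mkQ]
    exact hN this
  have := main ⊥
  exact isArtinian_of_linearEquiv (Submodule.quotEquivOfEqBot (⊥ : Submodule R R) rfl)

/-- A commutative Noetherian ring with no middle class is Artinian. -/
theorem stmt_12 (R : Type u) [CommRing R] [IsNoetherianRing R]
    (h : NoMiddleClass R) : IsArtinianRing R := by
  have hmax : ∀ P : Ideal R, P.IsPrime → P.IsMaximal := by
    intro P hP
    by_contra hnm
    obtain ⟨m, hm, hPm⟩ := Ideal.exists_le_maximal P hP.ne_top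
    have hPltm : P < m := lt_of_le_of_ne hPm (by rintro rfl; exact hnm hm)
    obtain ⟨a, ham, haP⟩ := SetLike.exists_of_lt hPltm
    set I : Ideal R := P ⊔ Ideal.span {a ^ 2} with hIdef
    have ha2I : a ^ 2 ∈ I :=
      Ideal.mem_sup_right (Ideal.mem_span_singleton_self _)
    have haI : a ∉ I := by
      intro haIn
      rw [hIdef, Submodule.mem_sup] at haIn
      obtain ⟨p, hp, q, hq, hpq⟩ := haIn
      rw [Ideal.mem_span_singleton'] at hq
      obtain ⟨c, hc⟩ := hq
      have h1 : a * (1 - c * a) ∈ P := by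
        have heq : a * (1 - c * a) = p := by
          linear_combination -hpq - hc
        rw [heq]; exact hp
      rcases hP.mem_or_mem h1 with h' | h'
      · exact haP h'
      · have h1m : (1 : R) ∈ m := by
          have hca : c * a ∈ m := Ideal.mul_mem_left m c ham
          have := m.add_mem (hPm h') hca
          simpa using this
        exact hm.ne_top ((Ideal.eq_top_iff_one m).mpr h1m)
    have hIne : I ≠ ⊤ := fun hEq => haI (hEq ▸ Submodule.mem_top)
    haveI hBnt : Nontrivial (R ⧸ I) := Ideal.Quotient.nontrivial_iff.mpr hIne
    obtain ⟨M, _, _, hMinj, m0, hm0⟩ := exists_nonzero_injective (R ⧸ I)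
    letI : Module R M := Module.compHom M (Ideal.Quotient.mk I)
    have hsmul : ∀ (r : R) (x : M), r • x = Ideal.Quotient.mk I r • x := fun _ _ => rfl
    have hsmulB : ∀ (r : R) (x : R ⧸ I), r • x = Ideal.Quotient.mk I r * x := by
      intro r x
      obtain ⟨s, rfl⟩ := Ideal.Quotient.mk_surjective x
      rw [← map_mul]
      rfl
    rcases h M with hInj | hPoor
    · -- M would be injective over R: contradiction since a² kills M
      have hker : Ideal.torsionOf R R (a ^ 2) ≤
          LinearMap.ker (LinearMap.toSpanSingleton R M m0) := by
        intro z hz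
        rw [Ideal.mem_torsionOf_iff, smul_eq_mul] at hz
        have hzP : z ∈ P := by
          have hmem : z * a ^ 2 ∈ P := by rw [hz]; exact P.zero_mem
          rcases hP.mem_or_mem hmem with h' | h'
          · exact h'
          · exact absurd (hP.mem_of_pow_mem 2 h') haP
        have hzI : z ∈ I := Ideal.mem_sup_left hzP
        rw [LinearMap.mem_ker, LinearMap.toSpanSingleton_apply, hsmul,
          Ideal.Quotient.eq_zero_iff_mem.mpr hzI, zero_smul]
      set φ : (R ⧸ Ideal.torsionOf R R (a ^ 2)) →ₗ[R] M :=
        Submodule.liftQ _ (LinearMap.toSpanSingleton R M m0) hker with hφ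
      set e := Ideal.quotTorsionOfEquivSpanSingleton R R (a ^ 2) with he
      set i : (R ⧸ Ideal.torsionOf R R (a ^ 2)) →ₗ[R] R :=
        (Submodule.subtype _).comp e.toLinearMap with hi
      have hiinj : Function.Injective i := by
        intro x y hxy
        apply e.injective
        exact Subtype.val_injective hxy
      obtain ⟨g, hg⟩ := hInj.out i hiinj φ
      have h1 : g (a ^ 2) = m0 := by
        have hgx := hg (Submodule.Quotient.mk (1 : R))
        have hival : i (Submodule.Quotient.mk (1 : R)) = a ^ 2 := by
          rw [hi, LinearMap.comp_apply, LinearEquiv.coe_coe, he,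
            Ideal.quotTorsionOfEquivSpanSingleton_apply_mk]
          simp
        have hφval : φ (Submodule.Quotient.mk (1 : R)) = m0 := by
          rw [hφ, Submodule.liftQ_apply, LinearMap.toSpanSingleton_apply, one_smul]
        rw [hival, hφval] at hgx
        exact hgx
      have h2 : g (a ^ 2) = 0 := by
        have : g (a ^ 2) = (a ^ 2 : R) • g 1 := by
          rw [← map_smul, smul_eq_mul, mul_one]
        rw [this, hsmul, Ideal.Quotient.eq_zero_iff_mem.mpr ha2I, zero_smul]
      exact hm0 (by rw [← h1, h2])
    · -- M is poor; but M is (R ⧸ I)-injective, so R ⧸ I would be semisimple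
      have hrel : RelInjective R M (R ⧸ I) := by
        intro K f
        let K' : Submodule (R ⧸ I) (R ⧸ I) :=
          { carrier := K
            add_mem' := fun ha hb => K.add_mem ha hb
            zero_mem' := K.zero_mem
            smul_mem' := by
              intro b x hx
              obtain ⟨r, rfl⟩ := Ideal.Quotient.mk_surjective b
              have hbx : (Ideal.Quotient.mk I r) • x = r • x := by
                rw [smul_eq_mul, ← hsmulB]
              show (Ideal.Quotient.mk I r) • x ∈ K
              rw [hbx]
              exact K.smul_mem r hx }
        have hmemK : ∀ x : K', (x : R ⧸ I) ∈ K := fun x => x.2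
        let f' : K' →ₗ[R ⧸ I] M :=
          { toFun := fun x => f ⟨x.1, x.2⟩
            map_add' := by
              intro x y
              rw [← f.map_add]
              rfl
            map_smul' := by
              intro b x
              obtain ⟨r, rfl⟩ := Ideal.Quotient.mk_surjective b
              have hval : ((Ideal.Quotient.mk I r • x : K') : R ⧸ I)
                  = ((r • (⟨x.1, x.2⟩ : K) : K) : R ⧸ I) := by
                show (Ideal.Quotient.mk I r) • (x : R ⧸ I) = r • (x : R ⧸ I)
                rw [smul_eq_mul, ← hsmulB]
              show f ⟨((Ideal.Quotient.mk I r • x : K') : R ⧸ I), (Ideal.Quotient.mk I r • x : K').2⟩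
                = Ideal.Quotient.mk I r • f ⟨x.1, x.2⟩
              rw [← hsmul, ← f.map_smul]
              exact congrArg f (Subtype.ext hval)
          }
        obtain ⟨g', hg'⟩ := hMinj.out K'.subtype Subtype.val_injective f'
        refine ⟨{ toFun := g', map_add' := g'.map_add, map_smul' := ?_ }, ?_⟩
        · intro r x
          show g' (r • x) = r • g' x
          rw [hsmulB r x, ← smul_eq_mul, g'.map_smul, hsmul]
        · intro x
          show g' (x : R ⧸ I) = f x
          have := hg' ⟨x.1, x.2⟩
          rw [Submodule.subtype_apply] at this
          exact this
      haveI hss : IsSemisimpleModule R (R ⧸ I) := hPoor (R ⧸ I) hrel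
      obtain ⟨C, hC⟩ := exists_isCompl
        (Submodule.span R {(Ideal.Quotient.mk I a)} : Submodule R (R ⧸ I))
      have h1T : (1 : R ⧸ I) ∈
          (Submodule.span R {(Ideal.Quotient.mk I a)} : Submodule R (R ⧸ I)) ⊔ C := by
        rw [hC.sup_eq_top]
        trivial
      obtain ⟨s, hs, c, hcC, hsc⟩ := Submodule.mem_sup.mp h1T
      obtain ⟨r, hr⟩ := Submodule.mem_span_singleton.mp hs
      have hsq : Ideal.Quotient.mk I a * Ideal.Quotient.mk I a = 0 := by
        rw [← map_mul, ← sq, Ideal.Quotient.eq_zero_iff_mem]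
        exact ha2I
      have hs0 : Ideal.Quotient.mk I a * s = 0 := by
        rw [← hr, mul_smul_comm, hsq, smul_zero]
      have key : Ideal.Quotient.mk I a = a • c := by
        have hexp : Ideal.Quotient.mk I a
            = Ideal.Quotient.mk I a * s + Ideal.Quotient.mk I a * c := by
          rw [← mul_add, hsc, mul_one]
        rw [hexp, hs0, zero_add, hsmulB]
      have hbot : Ideal.Quotient.mk I a ∈
          (Submodule.span R {(Ideal.Quotient.mk I a)} : Submodule R (R ⧸ I)) ⊓ C :=
        ⟨Submodule.mem_span_singleton_self _, key ▸ C.smul_mem a hcC⟩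
      rw [hC.inf_eq_bot, Submodule.mem_bot] at hbot
      exact haI (Ideal.Quotient.eq_zero_iff_mem.mp hbot)
  exact artinianRing_of_prime_maximal R hmax
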